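/- Let G be a connected graph with adjacency matrix A, eigenvalues λ₁ ≥ ⋯ ≥ λₙ, and normalized Perron eigenvector ν. Let p be a real polynomial of degree at most k, Λ(p) = max_{2≤i≤n} p(λ_i) and λ(p) = min_{2≤i≤n} p(λ_i). For S ⊆ V define P(S,S) = Σ_{i,j∈S} p(A)_{ij}. Then −Λ(p)(|S| − ⟨χ_S,ν⟩²) ≤ p(λ₁)⟨χ_S,ν⟩² − P(S,S) ≤ −λ(p)(|S| − ⟨χ_S,ν⟩²). -/

import Mathlib

open Matrix Finset Polynomial


lemma my_sum_mulVec {n : ℕ} {α : Type*} (s : Finset α) (M : α → Matrix (Fin n) (Fin n) ℝ)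
    (v : Fin n → ℝ) : (∑ i ∈ s, M i) *ᵥ v = ∑ i ∈ s, (M i) *ᵥ v := by
  ext x
  simp only [Matrix.mulVec, dotProduct, Matrix.sum_apply, Finset.sum_apply,
    Finset.sum_mul]
  rw [Finset.sum_comm]

lemma my_aeval_mulVec {n : ℕ} (A : Matrix (Fin n) (Fin n) ℝ) (v : Fin n → ℝ) (t : ℝ)
    (h : A *ᵥ v = t • v) (p : Polynomial ℝ) :
    (Polynomial.aeval A p) *ᵥ v = p.eval t • v := by
  have hpow : ∀ m : ℕ, (A ^ m) *ᵥ v = t ^ m • v := by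
    intro m
    induction m with
    | zero => simp
    | succ m ih =>
      rw [pow_succ, ← mulVec_mulVec, h, mulVec_smul, ih, smul_smul, pow_succ, mul_comm]
  rw [Polynomial.aeval_eq_sum_range, Polynomial.eval_eq_sum_range, my_sum_mulVec,
    Finset.sum_smul]
  refine Finset.sum_congr rfl fun i _ => ?_
  rw [smul_mulVec, hpow, smul_smul]

lemma my_aeval_transpose {n : ℕ} (A : Matrix (Fin n) (Fin n) ℝ) (hA : Aᵀ = A)
    (p : Polynomial ℝ) : (Polynomial.aeval A p)ᵀ = Polynomial.aeval A p := by
  rw [Polynomial.aeval_eq_sum_range, transpose_sum]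
  refine Finset.sum_congr rfl fun i _ => ?_
  rw [transpose_smul, transpose_pow, hA]

/-- **Polynomial Expander Mixing Lemma, diagonal case** (Theorem 21(i) of the paper):
`−Λ(p)(|S| − ⟨χ_S,ν⟩²) ≤ p(λ₁)⟨χ_S,ν⟩² − P(S,S) ≤ −λ(p)(|S| − ⟨χ_S,ν⟩²)`. -/
theorem poly_eml_diagonal {n k : ℕ} (hn : 2 ≤ n)
    (G : SimpleGraph (Fin n)) [DecidableRel G.Adj] (hG : G.Connected)
    (A : Matrix (Fin n) (Fin n) ℝ) (hA : A = G.adjMatrix ℝ)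
    (hAH : A.IsHermitian)
    (lam : Fin n → ℝ) (hmono : Antitone lam)
    (heig : ∃ e : Fin n ≃ Fin n, ∀ i, lam i = hAH.eigenvalues (e i))
    (ν : Fin n → ℝ) (hνpos : ∀ i, 0 < ν i) (hνnorm : ∑ i, ν i ^ 2 = 1)
    (hνeig : A *ᵥ ν = lam ⟨0, by omega⟩ • ν)
    (p : Polynomial ℝ) (hdeg : p.natDegree ≤ k)
    (Lambda lamP : ℝ)
    (hLambda : IsGreatest {z | ∃ i : Fin n, i ≠ ⟨0, by omega⟩ ∧ z = p.eval (lam i)} Lambda)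
    (hlamP : IsLeast {z | ∃ i : Fin n, i ≠ ⟨0, by omega⟩ ∧ z = p.eval (lam i)} lamP)
    (S : Finset (Fin n)) :
    -Lambda * ((S.card : ℝ) - (∑ i ∈ S, ν i) ^ 2)
      ≤ p.eval (lam ⟨0, by omega⟩) * (∑ i ∈ S, ν i) ^ 2
          - ∑ i ∈ S, ∑ j ∈ S, (Polynomial.aeval A p) i j ∧
    p.eval (lam ⟨0, by omega⟩) * (∑ i ∈ S, ν i) ^ 2
        - ∑ i ∈ S, ∑ j ∈ S, (Polynomial.aeval A p) i j
      ≤ -lamP * ((S.card : ℝ) - (∑ i ∈ S, ν i) ^ 2) := by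
  have hn0 : 0 < n := by omega
  obtain ⟨e, he⟩ := heig
  set z : Fin n := ⟨0, hn0⟩ with hzdef
  set B : Matrix (Fin n) (Fin n) ℝ := Polynomial.aeval A p with hBdef
  set u : Fin n → (Fin n → ℝ) := fun i => ⇑(hAH.eigenvectorBasis i) with hudef
  set μ : Fin n → ℝ := hAH.eigenvalues with hμdef
  have hνeig' : A *ᵥ ν = lam z • ν := hνeig
  have hAsymm : Aᵀ = A := (by simpa using hAH : A.IsSymm)
  have hBsym : Bᵀ = B := my_aeval_transpose A hAsymm p
  have parseval : ∀ x y : Fin n → ℝ, ∑ i, (x ⬝ᵥ u i) * (u i ⬝ᵥ y) = x ⬝ᵥ y := by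
    intro x y
    have := hAH.eigenvectorBasis.sum_inner_mul_inner
      ((WithLp.equiv 2 _).symm x) ((WithLp.equiv 2 _).symm y)
    simpa [PiLp.inner_apply, RCLike.inner_apply, dotProduct, hudef, mul_comm] using this
  have hsymmdot : ∀ (M : Matrix (Fin n) (Fin n) ℝ), Mᵀ = M →
      ∀ x y : Fin n → ℝ, x ⬝ᵥ (M *ᵥ y) = (M *ᵥ x) ⬝ᵥ y := by
    intro M hM x y
    rw [Matrix.dotProduct_mulVec, ← Matrix.mulVec_transpose, hM]
  have hBu : ∀ i, B *ᵥ u i = p.eval (μ i) • u i := fun i =>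
    my_aeval_mulVec _ _ _ (hAH.mulVec_eigenvectorBasis i) p
  have hBν : B *ᵥ ν = p.eval (lam z) • ν := my_aeval_mulVec _ _ _ hνeig' p
  set χ : Fin n → ℝ := fun i => if i ∈ S then 1 else 0 with hχdef
  set c : ℝ := ∑ i ∈ S, ν i with hcdef
  have hχdot : ∀ w : Fin n → ℝ, χ ⬝ᵥ w = ∑ i ∈ S, w i := by
    intro w
    simp [dotProduct, hχdef, ite_mul, Finset.sum_ite_mem]
  have hdotχ : ∀ w : Fin n → ℝ, w ⬝ᵥ χ = ∑ i ∈ S, w i := by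
    intro w; rw [dotProduct_comm]; exact hχdot w
  have hχν : χ ⬝ᵥ ν = c := hχdot ν
  have hνχ : ν ⬝ᵥ χ = c := hdotχ ν
  have hχχ : χ ⬝ᵥ χ = (S.card : ℝ) := by
    rw [hχdot]; simp [hχdef]
  have hνν : ν ⬝ᵥ ν = 1 := by
    simpa [dotProduct, sq] using hνnorm
  set P : ℝ := ∑ i ∈ S, ∑ j ∈ S, B i j with hPdef
  have hPeq : χ ⬝ᵥ (B *ᵥ χ) = P := by
    rw [hχdot, hPdef]
    refine Finset.sum_congr rfl fun i _ => ?_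
    exact hdotχ (fun j => B i j)
  set g : Fin n → ℝ := χ - c • ν with hgdef
  have hgν : g ⬝ᵥ ν = 0 := by
    rw [hgdef, sub_dotProduct, smul_dotProduct, hχν, hνν]
    simp
  have hgg : g ⬝ᵥ g = (S.card : ℝ) - c ^ 2 := by
    rw [hgdef]
    rw [sub_dotProduct, dotProduct_sub, dotProduct_sub,
      smul_dotProduct, smul_dotProduct, dotProduct_smul,
      dotProduct_smul, hχχ, hχν, hνχ, hνν]
    simp only [smul_eq_mul]
    ring
  have hgBg : g ⬝ᵥ (B *ᵥ g) = P - p.eval (lam z) * c ^ 2 := by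
    have hBg : B *ᵥ g = B *ᵥ χ - (c * p.eval (lam z)) • ν := by
      rw [hgdef, Matrix.mulVec_sub, Matrix.mulVec_smul, hBν, smul_smul]
    rw [hgdef, hBg]
    rw [sub_dotProduct, dotProduct_sub, dotProduct_sub,
      smul_dotProduct, smul_dotProduct, dotProduct_smul,
      dotProduct_smul, hPeq, hνν]
    have h1 : ν ⬝ᵥ (B *ᵥ χ) = p.eval (lam z) * c := by
      rw [hsymmdot B hBsym, hBν, smul_dotProduct, hνχ, smul_eq_mul]
    have h2 : χ ⬝ᵥ ν = c := hχν
    rw [h1, h2]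
    simp only [smul_eq_mul]
    ring
  set d : Fin n → ℝ := fun i => g ⬝ᵥ u i with hddef
  have hggsum : g ⬝ᵥ g = ∑ i, d i ^ 2 := by
    rw [← parseval g g]
    exact Finset.sum_congr rfl fun i _ => by
      rw [dotProduct_comm (u i) g]
      exact (pow_two (d i)).symm
  have hgBgsum : g ⬝ᵥ (B *ᵥ g) = ∑ i, p.eval (μ i) * d i ^ 2 := by
    rw [← parseval g (B *ᵥ g)]
    refine Finset.sum_congr rfl fun i _ => ?_
    have : u i ⬝ᵥ (B *ᵥ g) = p.eval (μ i) * d i := by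
      rw [hsymmdot B hBsym, hBu, smul_dotProduct, smul_eq_mul,
        dotProduct_comm]
    rw [this]; ring
  -- termwise bounds
  have termwise : ∀ i, lamP * d i ^ 2 ≤ p.eval (μ i) * d i ^ 2 ∧
      p.eval (μ i) * d i ^ 2 ≤ Lambda * d i ^ 2 := by
    intro i
    by_cases hi : ∃ j, j ≠ z ∧ lam j = μ i
    · obtain ⟨j, hjz, hj⟩ := hi
      have hmem : p.eval (μ i) ∈ {w | ∃ i : Fin n, i ≠ z ∧ w = p.eval (lam i)} :=
        ⟨j, hjz, by rw [hj]⟩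
      exact ⟨mul_le_mul_of_nonneg_right (hlamP.2 hmem) (sq_nonneg _),
        mul_le_mul_of_nonneg_right (hLambda.2 hmem) (sq_nonneg _)⟩
    · push_neg at hi
      -- then d i = 0
      have hei : e.symm i = z := by
        by_contra h
        exact hi _ h (by rw [he, Equiv.apply_symm_apply])
      have hμi : μ i = lam z := by
        rw [← hei, he, Equiv.apply_symm_apply]
      have huniq : ∀ j, j ≠ i → μ j ≠ lam z := by
        intro j hji hj
        have hej : e.symm j ≠ z := by
          intro h
          exact hji (by rw [← Equiv.apply_symm_apply e j, h, ← hei,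
            Equiv.apply_symm_apply])
        exact hi _ hej (by rw [he, Equiv.apply_symm_apply, hj, hμi])
      have hcoef : ∀ j, j ≠ i → ν ⬝ᵥ u j = 0 := by
        intro j hji
        have h1 : (A *ᵥ ν) ⬝ᵥ u j = lam z * (ν ⬝ᵥ u j) := by
          rw [hνeig', smul_dotProduct, smul_eq_mul]
        have h2 : (A *ᵥ ν) ⬝ᵥ u j = μ j * (ν ⬝ᵥ u j) := by
          rw [← hsymmdot A hAsymm, hAH.mulVec_eigenvectorBasis j]
          rw [dotProduct_smul, smul_eq_mul]
        have h3 : (lam z - μ j) * (ν ⬝ᵥ u j) = 0 := by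
          rw [sub_mul]; linarith [h1, h2]
        rcases mul_eq_zero.mp h3 with h | h
        · exact absurd (sub_eq_zero.mp h).symm (huniq j hji)
        · exact h
      have hνui : ν ⬝ᵥ u i ≠ 0 := by
        intro h0
        have := parseval ν ν
        rw [hνν] at this
        have hzero : ∀ j ∈ Finset.univ, (ν ⬝ᵥ u j) * (u j ⬝ᵥ ν) = 0 := by
          intro j _
          by_cases hji : j = i
          · rw [hji, h0, zero_mul]
          · rw [hcoef j hji, zero_mul]
        rw [Finset.sum_eq_zero hzero] at this
        norm_num at this
      have hdi : d i = 0 := by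
        have hp := parseval g ν
        rw [hgν] at hp
        have : ∑ j, (g ⬝ᵥ u j) * (u j ⬝ᵥ ν) = d i * (u i ⬝ᵥ ν) := by
          rw [Finset.sum_eq_single i]
          · intro j _ hji
            rw [dotProduct_comm (u j) ν, hcoef j hji, mul_zero]
          · intro h; exact absurd (Finset.mem_univ i) h
        rw [this] at hp
        rcases mul_eq_zero.mp hp with h | h
        · exact h
        · rw [dotProduct_comm] at h
          exact absurd h hνui
      rw [hdi]
      norm_num
  have hlow : lamP * (g ⬝ᵥ g) ≤ g ⬝ᵥ (B *ᵥ g) := by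
    rw [hggsum, hgBgsum, Finset.mul_sum]
    exact Finset.sum_le_sum fun i _ => (termwise i).1
  have hhigh : g ⬝ᵥ (B *ᵥ g) ≤ Lambda * (g ⬝ᵥ g) := by
    rw [hggsum, hgBgsum, Finset.mul_sum]
    exact Finset.sum_le_sum fun i _ => (termwise i).2
  rw [hgg, hgBg] at hlow hhigh
  constructor
  · linarith
  · linarith
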